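/- Adding a potential-based shaping term changes the discounted return of every infinite trajectory by exactly −Φ(s₀). Consequently, for two policies generating trajectory distributions with the same initial state s₀, the difference of shaped expected returns equals the difference of original expected returns; hence a policy maximizes shaped return if and only if it maximizes the original return. -/

import Mathlib

/-- Potential-based shaping changes the return of every trajectory by exactly
`-Φ s₀`; hence, for any two policies (weight distributions over finitely many trajectories
all starting at `s₀`), the difference of shaped expected returns equals the difference of the
original expected returns, and a policy maximizes the shaped return iff it maximizes the
original return. -/
theorem pbrs_policy_invariance {S : Type*} (n : ℕ) (γ Rmax Φmax : ℝ)
    (hγ : γ ∈ Set.Ioo (0:ℝ) 1)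
    (Φ : S → ℝ) (hΦ : ∀ x, |Φ x| ≤ Φmax)
    (s : Fin n → ℕ → S) (R : Fin n → ℕ → ℝ)
    (hR : ∀ i t, |R i t| ≤ Rmax)
    (s₀ : S) (hs₀ : ∀ i, s i 0 = s₀)
    (J Jsh : Fin n → ℝ)
    (hJ : ∀ i, HasSum (fun t : ℕ => γ ^ t * R i t) (J i))
    (hJsh : ∀ i, HasSum
      (fun t : ℕ => γ ^ t * (R i t + γ * Φ (s i (t + 1)) - Φ (s i t))) (Jsh i)) :
    (∀ i, Jsh i = J i - Φ s₀) ∧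
    (∀ w w' : Fin n → ℝ, (∀ i, 0 ≤ w i) → (∀ i, 0 ≤ w' i) →
      (∑ i, w i) = 1 → (∑ i, w' i) = 1 →
      ((∑ i, w i * Jsh i) - (∑ i, w' i * Jsh i) =
        (∑ i, w i * J i) - (∑ i, w' i * J i)) ∧
      ((∑ i, w' i * Jsh i ≤ ∑ i, w i * Jsh i) ↔
        (∑ i, w' i * J i ≤ ∑ i, w i * J i))) := by
  obtain ⟨hγ0, hγ1⟩ := hγ
  have key : ∀ i, Jsh i = J i - Φ s₀ := by
    intro i
    set g : ℕ → ℝ := fun t => γ ^ t * Φ (s i t) with hg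
    have hsub : HasSum (fun t : ℕ => g (t + 1) - g t) (Jsh i - J i) := by
      have h := (hJsh i).sub (hJ i)
      convert h using 2 with t
      case e'_3 => rfl
      simp only [hg]
      ring
    have htend := hsub.tendsto_sum_nat
    have heq : ∀ N, ∑ t ∈ Finset.range N, (g (t + 1) - g t) = g N - g 0 :=
      fun N => Finset.sum_range_sub g N
    have hgt : Filter.Tendsto g Filter.atTop (nhds 0) := by
      refine squeeze_zero_norm (a := fun t => γ ^ t * Φmax) ?_ ?_
      · intro t
        simp only [hg, Real.norm_eq_abs, abs_mul, abs_pow, abs_of_pos hγ0]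
        exact mul_le_mul_of_nonneg_left (hΦ _) (pow_nonneg hγ0.le _)
      · have := tendsto_pow_atTop_nhds_zero_of_lt_one hγ0.le hγ1
        simpa using this.mul_const Φmax
    have htend2 : Filter.Tendsto (fun N => ∑ t ∈ Finset.range N, (g (t + 1) - g t))
        Filter.atTop (nhds (0 - g 0)) := by
      simp only [heq]
      exact hgt.sub tendsto_const_nhds
    have := tendsto_nhds_unique htend htend2
    have hg0 : g 0 = Φ s₀ := by simp [hg, hs₀ i]
    rw [hg0] at this
    linarith
  refine ⟨key, fun w w' hw hw' hws hw's => ?_⟩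
  have hsum : ∀ (v : Fin n → ℝ), (∑ i, v i) = 1 →
      (∑ i, v i * Jsh i) = (∑ i, v i * J i) - Φ s₀ := by
    intro v hv
    have : (∑ i, v i * Jsh i) = ∑ i, (v i * J i - v i * Φ s₀) := by
      apply Finset.sum_congr rfl
      intro i _
      rw [key i]; ring
    rw [this, Finset.sum_sub_distrib, ← Finset.sum_mul, hv, one_mul]
  rw [hsum w hws, hsum w' hw's]
  constructor
  · ring
  · constructor <;> intro h <;> linarith
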